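/- Let A be a commutative ring graded by a finitely generated abelian group G. Then A is Noetherian if and only if the degree-zero piece A₀ is a Noetherian ring and A is finitely generated as an A₀-algebra. -/

import Mathlib

open DirectSum

section GY
variable {G A : Type*} [AddCommGroup G] [DecidableEq G] [CommRing A]
  (𝒜 : G → AddSubgroup A) [GradedRing 𝒜]

/-- Component extraction: if a homogeneous `x` of degree `g` lies in the ideal spanned by a
finite set of homogeneous elements, then it is a combination with homogeneous coefficients of
the complementary degrees. -/
theorem gy_extract (T : Finset A) (d : A → G) (hT : ∀ z ∈ T, z ∈ 𝒜 (d z))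
    {g : G} {x : A} (hx : x ∈ 𝒜 g) (hmem : x ∈ Ideal.span (T : Set A)) :
    ∃ c : A → A, (∀ z ∈ T, c z ∈ 𝒜 (g - d z)) ∧ x = ∑ z ∈ T, c z * z := by
  rw [Ideal.span, Submodule.mem_span_finset] at hmem
  obtain ⟨f, -, hf⟩ := hmem
  refine ⟨fun z => (decompose 𝒜 (f z) (g - d z) : A), fun z _ => SetLike.coe_mem _, ?_⟩
  have hx2 : x = ∑ z ∈ T, f z * z := by simpa [smul_eq_mul] using hf.symm
  calc x = (decompose 𝒜 x g : A) := (DirectSum.decompose_of_mem_same 𝒜 hx).symm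
    _ = ∑ z ∈ T, (decompose 𝒜 (f z * z) g : A) := by
        conv_lhs => rw [hx2]
        rw [DirectSum.decompose_sum, DFinsupp.finset_sum_apply,
          AddSubmonoidClass.coe_finset_sum]
    _ = ∑ z ∈ T, (decompose 𝒜 (f z) (g - d z) : A) * z := by
        refine Finset.sum_congr rfl fun z hz => ?_
        have h := DirectSum.coe_decompose_mul_add_of_right_mem 𝒜
          (i := g - d z) (a := f z) (hT z hz)
        rwa [sub_add_cancel] at h

/-- A Noetherian ideal span of a set is spanned by a finite subset. -/
theorem gy_finsubset (hN : IsNoetherianRing A) (U : Set A) :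
    ∃ T : Finset A, ↑T ⊆ U ∧ Ideal.span (T : Set A) = Ideal.span U := by
  classical
  obtain ⟨w, hw⟩ := (isNoetherianRing_iff_ideal_fg A).mp hN (Ideal.span U)
  have h1 : ∀ x ∈ w, ∃ T : Finset A, ↑T ⊆ U ∧ x ∈ Ideal.span (T : Set A) := fun x hx =>
    Submodule.mem_span_finite_of_mem_span (show x ∈ Ideal.span U from hw ▸ Ideal.subset_span hx)
  choose! T hT hxT using h1
  refine ⟨w.biUnion T, ?_, le_antisymm ?_ ?_⟩
  · intro z hz
    obtain ⟨x, hx, hz⟩ := Finset.mem_biUnion.mp hz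
    exact hT x hx hz
  · rw [Ideal.span_le]
    intro z hz
    obtain ⟨x, hx, hz⟩ := Finset.mem_biUnion.mp (by exact_mod_cast hz)
    exact Ideal.subset_span (hT x hx hz)
  · rw [← hw, Ideal.span_le]
    intro x hx
    exact Ideal.span_mono (by exact_mod_cast Finset.subset_biUnion_of_mem T hx) (hxT x hx)


theorem gy_top {R : Subring A} (h : ∀ g, (𝒜 g : Set A) ⊆ R) : R = ⊤ := by
  classical
  rw [eq_top_iff]
  intro a _
  rw [← DirectSum.sum_support_decompose 𝒜 a]
  exact Subring.sum_mem _ fun i _ => h i (SetLike.coe_mem _)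

theorem gy_core (hN : IsNoetherianRing A) (S : Set G) :
    ∃ (T : Finset A) (d : A → G), (∀ z ∈ T, d z ∈ S ∧ z ∈ 𝒜 (d z)) ∧
      ∀ g ∈ S, ∀ x ∈ 𝒜 g, ∃ c : A → A,
        (∀ z ∈ T, c z ∈ 𝒜 (g - d z)) ∧ x = ∑ z ∈ T, c z * z := by
  obtain ⟨T, hTU, hTspan⟩ := gy_finsubset hN (⋃ g ∈ S, (𝒜 g : Set A))
  have hz : ∀ z ∈ T, ∃ g ∈ S, z ∈ 𝒜 g := fun z hzT => by
    simpa using hTU hzT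
  choose! d hdS hdm using hz
  refine ⟨T, d, fun z hzT => ⟨hdS z hzT, hdm z hzT⟩, fun g hg x hx => ?_⟩
  refine gy_extract 𝒜 T d hdm hx ?_
  rw [hTspan]
  exact Ideal.subset_span (Set.mem_biUnion hg hx)

theorem gy_noeth_A0 (hN : IsNoetherianRing A) (A₀ : Subring A)
    (h0 : (A₀ : Set A) = (𝒜 0 : Set A)) : IsNoetherianRing A₀ := by
  rw [isNoetherianRing_iff_ideal_fg]
  intro I
  classical
  obtain ⟨T, hTU, hTspan⟩ := gy_finsubset hN (A₀.subtype '' (I : Set A₀))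
  have hTA0 : ∀ z ∈ T, z ∈ 𝒜 0 := by
    intro z hz
    obtain ⟨y, _, rfl⟩ := hTU hz
    exact (Set.ext_iff.mp h0 _).mp y.2
  have hinj : Set.InjOn (Subtype.val : A₀ → A) (Subtype.val ⁻¹' ↑T) :=
    fun a _ b _ h => Subtype.val_injective h
  refine ⟨T.preimage Subtype.val hinj, le_antisymm ?_ ?_⟩
  · rw [Ideal.span_le]
    intro z hzT
    rw [Finset.coe_preimage, Set.mem_preimage] at hzT
    obtain ⟨y, hy, hyz⟩ := hTU hzT
    rwa [show z = y from Subtype.val_injective hyz.symm]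
  · intro x hxI
    have hxA : (x : A) ∈ Ideal.span (T : Set A) := by
      rw [hTspan]
      exact Ideal.subset_span ⟨x, hxI, rfl⟩
    obtain ⟨c, hc, hrep⟩ := gy_extract 𝒜 T (fun _ => 0) hTA0 ((Set.ext_iff.mp h0 _).mp x.2) hxA
    have hcA0 : ∀ z ∈ T, c z ∈ A₀ := fun z hz => by
      have := hc z hz
      rw [sub_zero] at this
      exact (Set.ext_iff.mp h0 _).mpr this
    set c' : A₀ → A₀ := fun z =>
      ⟨(decompose 𝒜 (c (z : A)) 0 : A), (Set.ext_iff.mp h0 _).mpr (SetLike.coe_mem _)⟩ with hc'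
    have hc'val : ∀ z ∈ T.preimage Subtype.val hinj, ((c' z : A)) = c (z : A) := by
      intro z hz
      rw [Finset.mem_preimage] at hz
      exact DirectSum.decompose_of_mem_same 𝒜 (by
        have := hc _ hz; rwa [sub_zero] at this)
    have hx2 : x = ∑ z ∈ T.preimage Subtype.val hinj, c' z * z := by
      apply Subtype.val_injective
      push_cast
      rw [Finset.sum_congr rfl (fun z hz => by
        rw [hc'val z hz] : ∀ z ∈ T.preimage Subtype.val hinj,
          ((c' z : A) * (z : A)) = c (z : A) * (z : A))]
      rw [Finset.sum_preimage Subtype.val T hinj (fun z => c z * z)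
        (fun z hzT hz => by
          obtain ⟨y, _, rfl⟩ := hTU hzT
          exact absurd ⟨y, rfl⟩ hz)]
      exact hrep
    rw [hx2]
    exact Ideal.sum_mem _ fun z hz =>
      Ideal.mul_mem_left _ _ (Ideal.subset_span (Finset.mem_coe.mpr hz))


theorem gy_main (hN : IsNoetherianRing A) (S : Finset G) :
    ∃ s : Finset A, ∀ g ∈ AddSubgroup.closure (S : Set G),
      (𝒜 g : Set A) ⊆ Subring.closure ((𝒜 0 : Set A) ∪ ↑s) := by
  classical
  induction S using Finset.induction_on with
  | empty =>
      refine ⟨∅, fun g hg => ?_⟩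
      rw [Finset.coe_empty, AddSubgroup.closure_empty, AddSubgroup.mem_bot] at hg
      subst hg
      exact fun x hx => Subring.subset_closure (Or.inl hx)
  | @insert a S ha ih =>
      obtain ⟨sK, hsK⟩ := ih
      set K := AddSubgroup.closure (S : Set G) with hK
      set H := AddSubgroup.closure ((insert a S : Finset G) : Set G) with hH
      have hHK : ∀ g ∈ H, ∃ m : ℤ, ∃ k ∈ K, g = m • a + k := by
        intro g hg
        induction hg using AddSubgroup.closure_induction with
        | mem x hx =>
            rw [Finset.coe_insert, Set.mem_insert_iff] at hx
            rcases hx with rfl | hx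
            · exact ⟨1, 0, zero_mem _, by simp⟩
            · exact ⟨0, x, AddSubgroup.subset_closure hx, by simp⟩
        | zero => exact ⟨0, 0, zero_mem _, by simp⟩
        | add x y hx hy hx' hy' =>
            obtain ⟨m, k, hk, rfl⟩ := hx'
            obtain ⟨m', k', hk', rfl⟩ := hy'
            exact ⟨m + m', k + k', add_mem hk hk', by rw [add_zsmul]; abel⟩
        | neg x hx hx' =>
            obtain ⟨m, k, hk, rfl⟩ := hx'
            exact ⟨-m, -k, neg_mem hk, by rw [neg_zsmul]; abel⟩
      by_cases hfree : ∀ m : ℤ, m • a ∈ K → m = 0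
      · -- free case: ψ : G → ℤ well-defined degree
        set ψ : G → ℤ := fun g =>
          if h : ∃ m : ℤ, ∃ k ∈ K, g = m • a + k then h.choose else 0 with hψ
        have hψ_eq : ∀ (m : ℤ) (k : G), k ∈ K → ψ (m • a + k) = m := by
          intro m k hk
          have hex : ∃ m' : ℤ, ∃ k' ∈ K, m • a + k = m' • a + k' := ⟨m, k, hk, rfl⟩
          have hv : ψ (m • a + k) = hex.choose := by
            rw [hψ]; exact dif_pos hex
          obtain ⟨k', hk', heq⟩ := hex.choose_spec
          have h2 : (m - hex.choose) • a = k' - k := by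
            rw [sub_zsmul, ← sub_eq_add_neg, sub_eq_sub_iff_add_eq_add]
            exact heq.trans (add_comm _ _)
          have h3 : m - hex.choose = 0 := hfree _ (h2 ▸ sub_mem hk' hk)
          rw [hv]; omega

        have hψ_mem : ∀ g ∈ H, ∃ k ∈ K, g = ψ g • a + k := by
          intro g hg
          obtain ⟨m, k, hk, rfl⟩ := hHK g hg
          rw [hψ_eq m k hk]
          exact ⟨k, hk, rfl⟩
        have hψ_sub : ∀ g ∈ H, ∀ g' ∈ H, ψ (g - g') = ψ g - ψ g' := by
          intro g hg g' hg'
          obtain ⟨k, hk, hgk⟩ := hψ_mem g hg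
          obtain ⟨k', hk', hgk'⟩ := hψ_mem g' hg'
          have h1 : g - g' = (ψ g - ψ g') • a + (k - k') := by
            conv_lhs => rw [hgk, hgk']
            rw [sub_zsmul]
            abel
          rw [h1, hψ_eq _ _ (sub_mem hk hk')]
        have hψ_ker : ∀ g ∈ H, ψ g = 0 → g ∈ K := by
          intro g hg h0'
          obtain ⟨k, hk, hgk⟩ := hψ_mem g hg
          rw [h0', zero_zsmul, zero_add] at hgk
          exact hgk ▸ hk
        obtain ⟨Tp, dp, hTp, hrepp⟩ := gy_core 𝒜 hN {g | g ∈ H ∧ 1 ≤ ψ g}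
        obtain ⟨Tn, dn, hTn, hrepn⟩ := gy_core 𝒜 hN {g | g ∈ H ∧ ψ g ≤ -1}
        choose Tm dm hTm hrepm using fun n : ℤ =>
          gy_core 𝒜 hN {g | g ∈ H ∧ ψ g = n}
        set D : ℤ := 1 + ∑ z ∈ Tp, |ψ (dp z)| with hD
        set E : ℤ := -(1 + ∑ z ∈ Tn, |ψ (dn z)|) with hE
        have hDpos : 1 ≤ D := by
          have : 0 ≤ ∑ z ∈ Tp, |ψ (dp z)| :=
            Finset.sum_nonneg fun i _ => abs_nonneg _
          omega
        have hEneg : E ≤ -1 := by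
          have : 0 ≤ ∑ z ∈ Tn, |ψ (dn z)| :=
            Finset.sum_nonneg fun i _ => abs_nonneg _
          omega
        have hDb : ∀ z ∈ Tp, ψ (dp z) ≤ D := by
          intro z hz
          have h1 : |ψ (dp z)| ≤ ∑ z ∈ Tp, |ψ (dp z)| :=
            Finset.single_le_sum (f := fun z => |ψ (dp z)|)
              (fun i _ => abs_nonneg _) hz
          have h2 := le_abs_self (ψ (dp z))
          omega
        have hEb : ∀ z ∈ Tn, E ≤ ψ (dn z) := by
          intro z hz
          have h1 : |ψ (dn z)| ≤ ∑ z ∈ Tn, |ψ (dn z)| :=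
            Finset.single_le_sum (f := fun z => |ψ (dn z)|)
              (fun i _ => abs_nonneg _) hz
          have h2 := neg_abs_le (ψ (dn z))
          omega
        refine ⟨sK ∪ Tp ∪ Tn ∪ (Finset.Ioo E D).biUnion Tm, ?_⟩
        set s : Finset A := sK ∪ Tp ∪ Tn ∪ (Finset.Ioo E D).biUnion Tm with hs
        set R := Subring.closure ((𝒜 0 : Set A) ∪ ↑s) with hR
        have hsKs : (↑sK : Set A) ⊆ ↑s := by
          intro t ht; simp only [hs, Finset.coe_union, Set.mem_union]; tauto
        have hTps : (↑Tp : Set A) ⊆ ↑s := by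
          intro t ht; simp only [hs, Finset.coe_union, Set.mem_union]; tauto
        have hTns : (↑Tn : Set A) ⊆ ↑s := by
          intro t ht; simp only [hs, Finset.coe_union, Set.mem_union]; tauto
        have hTms : ∀ n ∈ Finset.Ioo E D, (↑(Tm n) : Set A) ⊆ ↑s := by
          intro n hn t ht
          simp only [hs, Finset.coe_union, Set.mem_union, Finset.coe_biUnion,
            Set.mem_iUnion]
          exact Or.inr ⟨n, hn, ht⟩
        have hKR : ∀ g ∈ K, (𝒜 g : Set A) ⊆ R := fun g hg =>
          (hsK g hg).trans
            (Subring.closure_mono (Set.union_subset_union_right _ hsKs))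
        have main : ∀ N : ℕ, ∀ g ∈ H, (ψ g).natAbs ≤ N → (𝒜 g : Set A) ⊆ R := by
          intro N
          induction N with
          | zero =>
              intro g hg hn
              exact hKR g (hψ_ker g hg (by omega))
          | succ N ihN =>
              intro g hg hn
              by_cases hle : (ψ g).natAbs ≤ N
              · exact ihN g hg hle
              rcases lt_or_ge 0 (ψ g) with hpos | hneg
              · by_cases hlt : ψ g < D
                · -- middle positive: use Tm (ψ g)
                  intro x hx
                  obtain ⟨c, hc, hrep⟩ := hrepm (ψ g) g ⟨hg, rfl⟩ x hx
                  rw [hrep]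
                  refine Subring.sum_mem _ fun z hz => Subring.mul_mem _ ?_ ?_
                  · have hd := hTm (ψ g) z hz
                    have hdH : dm (ψ g) z ∈ H := hd.1.1
                    refine hKR _ (hψ_ker _ (sub_mem hg hdH) ?_) (hc z hz)
                    rw [hψ_sub g hg _ hdH, hd.1.2, sub_self]
                  · exact Subring.subset_closure
                      (Or.inr (hTms (ψ g) (Finset.mem_Ioo.mpr ⟨by omega, hlt⟩) hz))
                · -- high positive: use Tp
                  intro x hx
                  obtain ⟨c, hc, hrep⟩ := hrepp g ⟨hg, by omega⟩ x hx
                  rw [hrep]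
                  refine Subring.sum_mem _ fun z hz => Subring.mul_mem _ ?_ ?_
                  · have hd := hTp z hz
                    have hdH : dp z ∈ H := hd.1.1
                    refine ihN _ (sub_mem hg hdH) ?_ (hc z hz)
                    rw [hψ_sub g hg _ hdH]
                    have h1 : 1 ≤ ψ (dp z) := hd.1.2
                    have h2 : ψ (dp z) ≤ D := hDb z hz
                    omega
                  · exact Subring.subset_closure (Or.inr (hTps hz))
              · -- negative
                by_cases hlt : E < ψ g
                · intro x hx
                  obtain ⟨c, hc, hrep⟩ := hrepm (ψ g) g ⟨hg, rfl⟩ x hx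
                  rw [hrep]
                  refine Subring.sum_mem _ fun z hz => Subring.mul_mem _ ?_ ?_
                  · have hd := hTm (ψ g) z hz
                    have hdH : dm (ψ g) z ∈ H := hd.1.1
                    refine hKR _ (hψ_ker _ (sub_mem hg hdH) ?_) (hc z hz)
                    rw [hψ_sub g hg _ hdH, hd.1.2, sub_self]
                  · exact Subring.subset_closure
                      (Or.inr (hTms (ψ g) (Finset.mem_Ioo.mpr ⟨hlt, by omega⟩) hz))
                · intro x hx
                  obtain ⟨c, hc, hrep⟩ := hrepn g ⟨hg, by omega⟩ x hx
                  rw [hrep]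
                  refine Subring.sum_mem _ fun z hz => Subring.mul_mem _ ?_ ?_
                  · have hd := hTn z hz
                    have hdH : dn z ∈ H := hd.1.1
                    refine ihN _ (sub_mem hg hdH) ?_ (hc z hz)
                    rw [hψ_sub g hg _ hdH]
                    have h1 : ψ (dn z) ≤ -1 := hd.1.2
                    have h2 : E ≤ ψ (dn z) := hEb z hz
                    omega
                  · exact Subring.subset_closure (Or.inr (hTns hz))
        exact fun g hg => main (ψ g).natAbs g hg le_rfl
      · push_neg at hfree
        obtain ⟨m₁, hm₁K, hm₁0⟩ := hfree
        have hm₀pos : 0 < |m₁| := abs_pos.mpr hm₁0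
        have hm₀K : |m₁| • a ∈ K := by
          rcases abs_choice m₁ with h | h
          · rwa [h]
          · rw [h, neg_zsmul]; exact neg_mem hm₁K
        set m₀ := |m₁| with hm₀
        choose Tc dc hTc hrepc using fun j : ℤ =>
          gy_core 𝒜 hN {g | g ∈ H ∧ g - j • a ∈ K}
        refine ⟨sK ∪ (Finset.Ico 0 m₀).biUnion Tc, fun g hg x hx => ?_⟩
        obtain ⟨m, k, hk, rfl⟩ := hHK g hg
        set j := m % m₀ with hj
        have hj0 : 0 ≤ j := Int.emod_nonneg m (by omega)
        have hjm : j < m₀ := Int.emod_lt_of_pos m hm₀pos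
        have hsub : ∀ g' ∈ H, g' - (m % m₀) • a ∈ K → ∀ y ∈ 𝒜 g',
            y ∈ Subring.closure ((𝒜 0 : Set A) ∪ ↑(sK ∪ (Finset.Ico 0 m₀).biUnion Tc)) := by
          intro g' hg' hgK y hy
          obtain ⟨c, hc, hrep⟩ := hrepc j g' ⟨hg', hgK⟩ y hy
          rw [hrep]
          refine Subring.sum_mem _ fun z hz => Subring.mul_mem _ ?_ ?_
          · -- coefficient is of K-degree
            have hd := hTc j z hz
            have hdK : g' - dc j z ∈ K := by
              have h2 := hd.1.2
              have : g' - dc j z = (g' - j • a) - (dc j z - j • a) := by abel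
              rw [this]
              exact sub_mem hgK h2
            have hmem : c z ∈ Subring.closure ((𝒜 0 : Set A) ∪ ↑sK) :=
              hsK _ hdK (hc z hz)
            refine Subring.closure_mono (Set.union_subset_union_right _ ?_) hmem
            intro t ht
            simp only [Finset.coe_union, Set.mem_union]
            exact Or.inl ht
          · apply Subring.subset_closure
            right
            simp only [Finset.coe_union, Set.mem_union, Finset.coe_biUnion, Set.mem_iUnion]
            right
            exact ⟨j, by simp [Finset.mem_Ico, hj0, hjm], hz⟩
        have hgH : m • a + k ∈ H := hg
        have hgK : (m • a + k) - j • a ∈ K := by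
          have hdiv : m - j = m₀ * (m / m₀) := by
            rw [hj, Int.emod_def]; ring
          have h1 : (m • a + k) - j • a = (m - j) • a + k := by
            rw [sub_zsmul]; abel
          rw [h1, hdiv, mul_comm, mul_zsmul]
          exact add_mem (AddSubgroup.zsmul_mem K hm₀K _) hk
        exact hsub _ hgH hgK x hx



end GY


/-- **Goto–Yamagishi.** Let `A` be a commutative ring graded by a finitely
generated abelian group `G`, with grading `𝒜 : G → AddSubgroup A`, and let `A₀` be the
subring given by the piece of degree `0`. Then `A` is Noetherian iff `A₀` is a Noetherian
ring and `A` is finitely generated as an `A₀`-algebra (i.e. generated as a ring by `A₀`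
together with finitely many elements). -/
theorem stmt6 {G A : Type*} [AddCommGroup G] [AddGroup.FG G] [DecidableEq G]
    [CommRing A] (𝒜 : G → AddSubgroup A) [GradedRing 𝒜]
    (A₀ : Subring A) (h0 : (A₀ : Set A) = (𝒜 0 : Set A)) :
    IsNoetherianRing A ↔
      IsNoetherianRing A₀ ∧ ∃ s : Finset A, Subring.closure ((A₀ : Set A) ∪ ↑s) = ⊤ := by
  constructor
  · intro hN
    refine ⟨gy_noeth_A0 𝒜 hN A₀ h0, ?_⟩
    obtain ⟨S, hS⟩ := (AddGroup.fg_def.mp ‹AddGroup.FG G›)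
    obtain ⟨s, hs⟩ := gy_main 𝒜 hN S
    refine ⟨s, ?_⟩
    rw [h0]
    exact gy_top 𝒜 fun g => hs g (hS ▸ AddSubgroup.mem_top g)
  · rintro ⟨hN0, s, hs⟩
    have hadj : Algebra.adjoin A₀ (s : Set A) = ⊤ := by
      have h1 := Algebra.adjoin_eq_ring_closure (R := A₀) (A := A) (s : Set A)
      have h2 : Set.range (algebraMap A₀ A) = (A₀ : Set A) :=
        Subtype.range_coe
      rw [h2, hs] at h1
      apply_fun Subalgebra.toSubring using fun x y h => by
        ext t; exact SetLike.ext_iff.mp h t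
      rw [h1]
      rfl
    haveI : Algebra.FiniteType A₀ A := ⟨s, hadj⟩
    exact Algebra.FiniteType.isNoetherianRing A₀ A
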